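/- For every β > 0, one has 0 < 2β e^{β²} ∫_β^∞ e^{-z²} dz < 1, and the function β ↦ 2β e^{β²} ∫_β^∞ e^{-z²} dz maps (0,∞) onto (0,1). -/

import Mathlib

open MeasureTheory Real Set Filter

noncomputable def gT (β : ℝ) : ℝ := ∫ z in Set.Ioi β, Real.exp (-z ^ 2)

lemma intE : Integrable (fun z : ℝ => Real.exp (-z ^ 2)) := by
  simpa using integrable_exp_neg_mul_sq (by norm_num : (0:ℝ) < 1)

lemma intxE : Integrable (fun z : ℝ => z * Real.exp (-z ^ 2)) := by
  simpa using integrable_mul_exp_neg_mul_sq (by norm_num : (0:ℝ) < 1)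

lemma gT_pos (β : ℝ) : 0 < gT β := by
  rw [gT, setIntegral_pos_iff_support_of_nonneg_ae
    (Eventually.of_forall fun z => (Real.exp_pos _).le) intE.integrableOn]
  have : Function.support (fun z : ℝ => Real.exp (-z ^ 2)) = Set.univ := by
    ext z; simp [(Real.exp_pos _).ne']
  rw [this, Set.univ_inter]
  simp [Real.volume_Ioi]

lemma tail_xE (β : ℝ) : ∫ z in Set.Ioi β, z * Real.exp (-z ^ 2) = Real.exp (-β ^ 2) / 2 := by
  have hderiv : ∀ x ∈ Set.Ici β, HasDerivAt (fun z : ℝ => -Real.exp (-z ^ 2) / 2)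
      (x * Real.exp (-x ^ 2)) x := by
    intro x _
    have h1 : HasDerivAt (fun z : ℝ => -z ^ 2) (-(2 * x)) x := by
      simpa using ((hasDerivAt_pow 2 x).fun_neg)
    have := (h1.exp).fun_neg.div_const 2
    exact this.congr_deriv (by ring)
  have htop : Tendsto (fun z : ℝ => -Real.exp (-z ^ 2) / 2) atTop (nhds 0) := by
    have : Tendsto (fun z : ℝ => -z ^ 2) atTop atBot := by
      simpa using (tendsto_pow_atTop (two_ne_zero)).neg
    have := (Real.tendsto_exp_atBot.comp this).neg.div_const 2
    simp at this; simpa using this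
  have := integral_Ioi_of_hasDerivAt_of_tendsto' hderiv intxE.integrableOn htop
  rw [this]; ring

lemma gT_lt (β : ℝ) (hβ : 0 < β) : gT β < Real.exp (-β ^ 2) / (2 * β) := by
  have hpos : 0 < ∫ z in Set.Ioi β, (z / β - 1) * Real.exp (-z ^ 2) := by
    have hint : IntegrableOn (fun z : ℝ => (z / β - 1) * Real.exp (-z ^ 2)) (Set.Ioi β) := by
      have : (fun z : ℝ => (z / β - 1) * Real.exp (-z ^ 2)) =
          fun z => (1 / β) * (z * Real.exp (-z ^ 2)) - Real.exp (-z ^ 2) := by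
        ext z; field_simp
      rw [this]
      exact ((intxE.const_mul _).sub intE).integrableOn
    have hnn : 0 ≤ᶠ[ae (volume.restrict (Set.Ioi β))]
        fun z : ℝ => (z / β - 1) * Real.exp (-z ^ 2) := by
      filter_upwards [ae_restrict_mem measurableSet_Ioi] with z hz
      have h1 : 0 ≤ z / β - 1 := by
        rw [sub_nonneg, le_div_iff₀ hβ, one_mul]; exact le_of_lt hz
      positivity
    rw [setIntegral_pos_iff_support_of_nonneg_ae hnn hint]
    refine lt_of_lt_of_le ?_ (measure_mono (?_ :
      Set.Ioi (β + 1) ⊆ Function.support (fun z : ℝ => (z / β - 1) * Real.exp (-z ^ 2)) ∩ Set.Ioi β))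
    · simp [Real.volume_Ioi]
    · intro z hz
      have hz' : β + 1 < z := hz
      constructor
      · have h1 : 0 < z / β - 1 := by
          rw [sub_pos, lt_div_iff₀ hβ, one_mul]; linarith
        exact ne_of_gt (mul_pos h1 (Real.exp_pos _))
      · show β < z; linarith
  have heq : ∫ z in Set.Ioi β, (z / β - 1) * Real.exp (-z ^ 2)
      = (1 / β) * (Real.exp (-β ^ 2) / 2) - gT β := by
    have : (fun z : ℝ => (z / β - 1) * Real.exp (-z ^ 2)) =
        fun z => (1 / β) * (z * Real.exp (-z ^ 2)) - Real.exp (-z ^ 2) := by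
      ext z; field_simp
    rw [this, integral_sub ((intxE.const_mul _).integrableOn) intE.integrableOn,
      MeasureTheory.integral_const_mul, tail_xE, gT]
  rw [heq] at hpos
  have h2 : 0 < 2 * β := by linarith
  rw [lt_div_iff₀ h2]
  have h4 := mul_pos hβ hpos
  have h5 : β * (1/β) = 1 := by field_simp
  nlinarith [Real.exp_pos (-β^2)]

lemma gT_ge (β : ℝ) (hβ : 0 < β) :
    Real.exp (-β ^ 2) * (1 - Real.exp (-(2 * β + 1))) / (2 * β + 1) ≤ gT β := by
  have hc : (0:ℝ) < 2 * β + 1 := by linarith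
  set c : ℝ := 2 * β + 1 with hcdef
  have hle : β ≤ β + 1 := by linarith
  -- the comparison function
  set L : ℝ → ℝ := fun z => Real.exp (-β ^ 2 - c * (z - β)) with hL
  have hLder : ∀ z : ℝ, HasDerivAt (fun z => -(Real.exp (-β ^ 2 - c * (z - β))) / c) (L z) z := by
    intro z
    have h1 : HasDerivAt (fun z : ℝ => -β ^ 2 - c * (z - β)) (-c) z := by
      have := (((hasDerivAt_id z).sub_const β).const_mul c).const_sub (-β ^ 2)
      simpa using this
    have := (h1.exp).fun_neg.div_const c
    exact this.congr_deriv (by field_simp [hL]; rfl)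
  have hcalc : ∫ z in Set.Ioc β (β + 1), L z
      = Real.exp (-β ^ 2) * (1 - Real.exp (-c)) / c := by
    rw [← intervalIntegral.integral_of_le hle]
    have hLc : Continuous L := by
      apply Real.continuous_exp.comp; fun_prop
    rw [intervalIntegral.integral_eq_sub_of_hasDerivAt (fun z _ => hLder z)
      (hLc.intervalIntegrable _ _)]
    have h1 : β + 1 - β = 1 := by ring
    have h2 : β - β = 0 := by ring
    have h3 : Real.exp (-β ^ 2 - c * 1) = Real.exp (-β ^ 2) * Real.exp (-c) := by
      rw [← Real.exp_add]; ring_nf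
    rw [h1, h2, mul_zero, sub_zero, h3]
    field_simp
    ring
  have hmono : ∫ z in Set.Ioc β (β + 1), L z ≤ ∫ z in Set.Ioc β (β + 1), Real.exp (-z ^ 2) := by
    apply setIntegral_mono_on
    · exact (Real.continuous_exp.comp (by fun_prop)).integrableOn_Ioc
    · exact intE.integrableOn
    · exact measurableSet_Ioc
    · intro z hz
      apply Real.exp_le_exp.2
      rcases hz with ⟨h1, h2⟩
      nlinarith
  have hsub : ∫ z in Set.Ioc β (β + 1), Real.exp (-z ^ 2) ≤ gT β := by
    apply setIntegral_mono_set intE.integrableOn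
    · exact Eventually.of_forall fun z => (Real.exp_pos _).le
    · exact HasSubset.Subset.eventuallyLE Set.Ioc_subset_Ioi_self
  calc Real.exp (-β ^ 2) * (1 - Real.exp (-c)) / c = ∫ z in Set.Ioc β (β + 1), L z := hcalc.symm
    _ ≤ _ := hmono.trans hsub

lemma gT_eq (β : ℝ) : gT β = gT 0 - ∫ z in (0:ℝ)..β, Real.exp (-z ^ 2) := by
  have key : ∀ a b : ℝ, a ≤ b → gT a = (∫ z in Set.Ioc a b, Real.exp (-z ^ 2)) + gT b := by
    intro a b hab
    rw [gT, gT, ← setIntegral_union ?_ measurableSet_Ioi intE.integrableOn intE.integrableOn,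
      Set.Ioc_union_Ioi_eq_Ioi hab]
    rw [Set.disjoint_left]
    intro z hz hz'
    exact absurd hz.2 (not_le.2 hz')
  rcases le_or_gt 0 β with h | h
  · rw [intervalIntegral.integral_of_le h, key 0 β h]; ring
  · rw [intervalIntegral.integral_of_ge h.le, key β 0 h.le]; ring

lemma gT_cont : Continuous gT := by
  have : Continuous fun β : ℝ => ∫ z in (0:ℝ)..β, Real.exp (-z ^ 2) :=
    intE.continuous_primitive 0
  have h2 : Continuous fun β : ℝ => gT 0 - ∫ z in (0:ℝ)..β, Real.exp (-z ^ 2) :=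
    continuous_const.sub this
  have : gT = fun β : ℝ => gT 0 - ∫ z in (0:ℝ)..β, Real.exp (-z ^ 2) := funext gT_eq
  rw [this]; exact h2

lemma fB_lt_one (β : ℝ) (hβ : 0 < β) : 2 * β * Real.exp (β ^ 2) * gT β < 1 := by
  have h1 : 0 < 2 * β * Real.exp (β ^ 2) := by positivity
  have h2 := gT_lt β hβ
  have h3 : 2 * β * Real.exp (β ^ 2) * gT β
      < 2 * β * Real.exp (β ^ 2) * (Real.exp (-β ^ 2) / (2 * β)) :=
    (mul_lt_mul_iff_right₀ h1).2 h2
  have h4 : Real.exp (β ^ 2) * Real.exp (-β ^ 2) = 1 := by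
    rw [← Real.exp_add]; simp
  calc 2 * β * Real.exp (β ^ 2) * gT β
      < 2 * β * Real.exp (β ^ 2) * (Real.exp (-β ^ 2) / (2 * β)) := h3
    _ = Real.exp (β ^ 2) * Real.exp (-β ^ 2) := by field_simp
    _ = 1 := h4

lemma fB_ge (β : ℝ) (hβ : 0 < β) :
    2 * β / (2 * β + 1) * (1 - Real.exp (-(2 * β + 1))) ≤ 2 * β * Real.exp (β ^ 2) * gT β := by
  have h1 : 0 < 2 * β * Real.exp (β ^ 2) := by positivity
  have h2 := gT_ge β hβ
  have h4 : Real.exp (β ^ 2) * Real.exp (-β ^ 2) = 1 := by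
    rw [← Real.exp_add]; simp
  have hc : (0:ℝ) < 2 * β + 1 := by linarith
  calc 2 * β / (2 * β + 1) * (1 - Real.exp (-(2 * β + 1)))
      = 2 * β * Real.exp (β ^ 2) *
        (Real.exp (-β ^ 2) * (1 - Real.exp (-(2 * β + 1))) / (2 * β + 1)) := by
        have hh : Real.exp (-β ^ 2) = (Real.exp (β ^ 2))⁻¹ := by rw [Real.exp_neg]
        rw [hh]; field_simp
    _ ≤ 2 * β * Real.exp (β ^ 2) * gT β := by
        exact (mul_le_mul_iff_right₀ h1).2 h2

lemma tendsto_lower : Filter.Tendsto (fun β : ℝ => 2 * β / (2 * β + 1) * (1 - Real.exp (-(2 * β + 1))))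
    Filter.atTop (nhds 1) := by
  have h1 : Filter.Tendsto (fun β : ℝ => 2 * β + 1) Filter.atTop Filter.atTop := by
    apply Filter.tendsto_atTop_add_const_right
    exact Filter.Tendsto.const_mul_atTop two_pos Filter.tendsto_id
  have h2 : Filter.Tendsto (fun β : ℝ => (2 * β + 1)⁻¹) Filter.atTop (nhds 0) :=
    h1.inv_tendsto_atTop
  have hA : Filter.Tendsto (fun β : ℝ => 2 * β / (2 * β + 1)) Filter.atTop (nhds 1) := by
    have := (tendsto_const_nhds (α := ℝ) (x := (1:ℝ)) (f := Filter.atTop)).sub h2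
    rw [sub_zero] at this
    apply this.congr'
    filter_upwards [Filter.eventually_gt_atTop (0:ℝ)] with β hβ
    have hc : (0:ℝ) < 2 * β + 1 := by linarith
    field_simp
    ring
  have hB : Filter.Tendsto (fun β : ℝ => 1 - Real.exp (-(2 * β + 1))) Filter.atTop (nhds 1) := by
    have hneg : Filter.Tendsto (fun β : ℝ => -(2 * β + 1)) Filter.atTop Filter.atBot :=
      Filter.tendsto_neg_atTop_atBot.comp h1
    have := (tendsto_const_nhds (α := ℝ) (x := (1:ℝ)) (f := Filter.atTop)).sub
      (Real.tendsto_exp_atBot.comp hneg)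
    simpa using this
  have := hA.mul hB
  simpa using this

theorem stmt_2 :
    (∀ β : ℝ, 0 < β →
      (fun β : ℝ => 2 * β * Real.exp (β ^ 2) * ∫ z in Set.Ioi β, Real.exp (-z ^ 2)) β ∈
        Set.Ioo (0 : ℝ) 1) ∧
    (fun β : ℝ => 2 * β * Real.exp (β ^ 2) * ∫ z in Set.Ioi β, Real.exp (-z ^ 2)) ''
        Set.Ioi 0 = Set.Ioo 0 1 := by
  set F : ℝ → ℝ := fun β : ℝ => 2 * β * Real.exp (β ^ 2) * ∫ z in Set.Ioi β, Real.exp (-z ^ 2)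
    with hF
  have hFg : ∀ β, F β = 2 * β * Real.exp (β ^ 2) * gT β := fun β => rfl
  have part1 : ∀ β : ℝ, 0 < β → F β ∈ Set.Ioo (0:ℝ) 1 := by
    intro β hβ
    rw [hFg]
    constructor
    · have := gT_pos β; positivity
    · exact fB_lt_one β hβ
  refine ⟨part1, ?_⟩
  have hFcont : Continuous F := by
    have h1 : Continuous fun β : ℝ => 2 * β * Real.exp (β ^ 2) := by fun_prop
    have : F = fun β => (2 * β * Real.exp (β ^ 2)) * gT β := funext hFg
    rw [this]
    exact h1.mul gT_cont
  apply Set.Subset.antisymm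
  · rintro y ⟨β, hβ, rfl⟩
    exact part1 β hβ
  · rintro y ⟨hy0, hy1⟩
    -- find b with y < F b
    have hev1 : ∀ᶠ β in Filter.atTop,
        y < 2 * β / (2 * β + 1) * (1 - Real.exp (-(2 * β + 1))) :=
      tendsto_lower.eventually (eventually_gt_nhds hy1)
    obtain ⟨b, hby, hb0⟩ := (hev1.and (Filter.eventually_gt_atTop (0:ℝ))).exists
    have hbF : y < F b := by
      rw [hFg]
      exact lt_of_lt_of_le hby (fB_ge b hb0)
    -- find a with F a < y
    set I : ℝ := ∫ z : ℝ, Real.exp (-z ^ 2) with hI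
    have hgle : ∀ β : ℝ, gT β ≤ I := fun β =>
      setIntegral_le_integral intE (Filter.Eventually.of_forall fun z => (Real.exp_pos _).le)
    have htend0 : Filter.Tendsto (fun β : ℝ => 2 * β * Real.exp (β ^ 2) * I)
        (nhdsWithin 0 (Set.Ioi 0)) (nhds 0) := by
      have hcont : Continuous fun β : ℝ => 2 * β * Real.exp (β ^ 2) * I := by fun_prop
      have h0 : Filter.Tendsto (fun β : ℝ => 2 * β * Real.exp (β ^ 2) * I) (nhds 0)
          (nhds (2 * 0 * Real.exp (0 ^ 2) * I)) := hcont.tendsto 0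
      have h0' := h0.mono_left (nhdsWithin_le_nhds (s := Set.Ioi (0:ℝ)))
      simpa using h0'
    have hev2 : ∀ᶠ β in nhdsWithin (0:ℝ) (Set.Ioi 0),
        2 * β * Real.exp (β ^ 2) * I < y :=
      htend0.eventually (eventually_lt_nhds hy0)
    obtain ⟨a, hay, ha0⟩ := (hev2.and self_mem_nhdsWithin).exists
    have haF : F a < y := by
      rw [hFg]
      have h1 : (0:ℝ) ≤ 2 * a * Real.exp (a ^ 2) := by positivity
      calc 2 * a * Real.exp (a ^ 2) * gT a ≤ 2 * a * Real.exp (a ^ 2) * I :=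
            mul_le_mul_of_nonneg_left (hgle a) h1
        _ < y := hay
    -- intermediate value
    have hsub := intermediate_value_uIcc (a := a) (b := b) (f := F) hFcont.continuousOn
    have hy : y ∈ Set.uIcc (F a) (F b) :=
      Set.Icc_subset_uIcc ⟨haF.le, hbF.le⟩
    obtain ⟨x, hx, hfx⟩ := hsub hy
    refine ⟨x, ?_, hfx⟩
    have := hx.1
    have hmin : 0 < min a b := lt_min ha0 hb0
    exact lt_of_lt_of_le hmin (hx.1 : min a b ≤ x)
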